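/- Fix m ≥ 3 and 2 ≤ i ≤ m−1, and let s, b, c ∈ 𝔪_S. Then the S-module S[x,y]/(xy − s, x^{m+1−i} + b·y^{i−1}, y^i + c·x^{m−i}) is free of rank m if and only if b·c = s. (This is the local equation of the relative Hilbert scheme of m points of the versal family xy = t at the point Q^m_i, showing it is smooth.) -/

import Mathlib

noncomputable section

open MvPolynomial

namespace HilbAux
variable {S : Type} [CommRing S]

noncomputable def F (b c : S) (q j : ℕ) : ℕ → ℕ → (Fin (j + q + 3) → S)
  | a + 1, d + 1 => (b * c) • F b c q j a d
  | 0, 0 => Pi.single (⟨0, by omega⟩ : Fin (j + q + 3)) 1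
  | a + 1, 0 =>
      if h : a + 1 ≤ q + 1 then Pi.single (⟨a + 1, by omega⟩ : Fin (j + q + 3)) 1
      else -b • F b c q j (a - q - 1) (j + 1)
  | 0, d + 1 =>
      if h : d ≤ j then Pi.single (⟨q + 2 + d, by omega⟩ : Fin (j + q + 3)) 1
      else -c • F b c q j (q + 1) (d - j - 1)
  termination_by a d => (j + 2) * a + (q + 2) * d
  decreasing_by
  · nlinarith
  · obtain ⟨k, rfl⟩ : ∃ k, a = q + 1 + k := ⟨a - q - 1, by omega⟩
    simp only [show q + 1 + k - q - 1 = k from by omega]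
    nlinarith
  · obtain ⟨k, rfl⟩ : ∃ k, d = j + 1 + k := ⟨d - j - 1, by omega⟩
    simp only [show j + 1 + k - j - 1 = k from by omega]
    nlinarith

lemma F_succ_succ (b c : S) (q j a d : ℕ) :
    F b c q j (a + 1) (d + 1) = (b * c) • F b c q j a d := by
  rw [F]

lemma F_x_le (b c : S) (q j : ℕ) {a : ℕ} (h : a ≤ q + 1) :
    F b c q j a 0 = Pi.single (⟨a, by omega⟩ : Fin (j + q + 3)) 1 := by
  match a with
  | 0 => rw [F]
  | a + 1 => rw [F, dif_pos h]

lemma F_x_gt (b c : S) (q j a : ℕ) :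
    F b c q j (a + q + 2) 0 = -b • F b c q j a (j + 1) := by
  rw [show a + q + 2 = (a + q + 1) + 1 from rfl, F, dif_neg (by omega),
    show a + q + 1 - q - 1 = a from by omega]

lemma F_y_le (b c : S) (q j : ℕ) (d : ℕ) (h : d ≤ j) :
    F b c q j 0 (d + 1) = Pi.single (⟨q + 2 + d, by omega⟩ : Fin (j + q + 3)) 1 := by
  rw [F, dif_pos h]

lemma F_y_gt (b c : S) (q j d : ℕ) :
    F b c q j 0 (d + j + 2) = -c • F b c q j (q + 1) d := by
  rw [show d + j + 2 = (d + j + 1) + 1 from rfl, F, dif_neg (by omega),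
    show d + j + 1 - j - 1 = d from by omega]

lemma FI2 (b c : S) (q j : ℕ) :
    ∀ d a, F b c q j (a + q + 2) d = -b • F b c q j a (d + j + 1) := by
  intro d
  induction d with
  | zero =>
    intro a
    simpa using F_x_gt b c q j a
  | succ d ih =>
    intro a
    match a with
    | 0 =>
      calc F b c q j (0 + q + 2) d.succ
          = (b * c) • F b c q j (q + 1) d := by
            rw [show 0 + q + 2 = (q + 1) + 1 from by omega, F_succ_succ]
        _ = -b • F b c q j 0 (d + 1 + j + 1) := by
            rw [show d + 1 + j + 1 = d + j + 2 from by omega, F_y_gt, smul_smul]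
            congr 1
            ring
    | a + 1 =>
      calc F b c q j (a + 1 + q + 2) (d + 1)
          = (b * c) • F b c q j (a + q + 2) d := by
            rw [show a + 1 + q + 2 = (a + q + 2) + 1 from by omega, F_succ_succ]
        _ = (b * c) • (-b • F b c q j a (d + j + 1)) := by rw [ih a]
        _ = -b • F b c q j (a + 1) (d + 1 + j + 1) := by
            rw [show d + 1 + j + 1 = (d + j + 1) + 1 from by omega, F_succ_succ,
              smul_smul, smul_smul]
            congr 1
            ring

lemma FI3 (b c : S) (q j : ℕ) :
    ∀ a d, F b c q j a (d + j + 2) = -c • F b c q j (a + q + 1) d := by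
  intro a
  induction a with
  | zero =>
    intro d
    simpa using F_y_gt b c q j d
  | succ a ih =>
    intro d
    match d with
    | 0 =>
      calc F b c q j (a + 1) (0 + j + 2)
          = (b * c) • F b c q j a (j + 1) := by
            rw [show 0 + j + 2 = (j + 1) + 1 from by omega, F_succ_succ]
        _ = -c • F b c q j (a + 1 + q + 1) 0 := by
            rw [show a + 1 + q + 1 = a + q + 2 from by omega, F_x_gt, smul_smul]
            congr 1
            ring
    | d + 1 =>
      calc F b c q j (a + 1) (d + 1 + j + 2)
          = (b * c) • F b c q j a (d + j + 2) := by
            rw [show d + 1 + j + 2 = (d + j + 2) + 1 from by omega, F_succ_succ]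
        _ = (b * c) • (-c • F b c q j (a + q + 1) d) := by rw [ih d]
        _ = -c • F b c q j (a + 1 + q + 1) (d + 1) := by
            rw [show a + 1 + q + 1 = (a + q + 1) + 1 from by omega, F_succ_succ,
              smul_smul, smul_smul]
            congr 1
            ring

lemma single_sub_single (n : ℕ) :
    Finsupp.single (1 : Fin 2) (n + 1) - Finsupp.single 1 1 = Finsupp.single 1 n := by
  ext t
  simp only [Finsupp.sub_apply, Finsupp.single_apply]
  split <;> simp_all [Finsupp.single_apply]

lemma cA0 (f : MvPolynomial (Fin 2) S) (n : ℕ) :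
    coeff (Finsupp.single 1 n) (f * X 0) = 0 := by
  rw [coeff_mul_X']
  simp [Finsupp.single_apply]

lemma cA (f : MvPolynomial (Fin 2) S) (n m : ℕ) :
    coeff (Finsupp.single 1 m) (f * X 0 ^ (n + 1)) = 0 := by
  rw [pow_succ, ← mul_assoc, cA0]

lemma cB (f : MvPolynomial (Fin 2) S) : ∀ n : ℕ,
    coeff (Finsupp.single 1 n) (f * X 1 ^ (n + 1)) = 0 := by
  intro n
  induction n with
  | zero =>
    rw [pow_one, coeff_mul_X']
    simp
  | succ n ih =>
    rw [pow_succ, ← mul_assoc, coeff_mul_X', if_pos, single_sub_single]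
    · exact ih
    · simp [Finsupp.mem_support_iff]

lemma cg1 (s : S) (f : MvPolynomial (Fin 2) S) (n : ℕ) :
    coeff (Finsupp.single 1 (n + 1)) (f * (X 0 * X 1 - C s))
      = -(s * coeff (Finsupp.single 1 (n + 1)) f) := by
  have h : f * (X 0 * X 1 - C s) = (f * X 0) * X 1 - C s * f := by ring
  rw [h, coeff_sub, coeff_mul_X', if_pos, single_sub_single, cA0, coeff_C_mul, zero_sub]
  simp [Finsupp.mem_support_iff]

lemma cg2 (b : S) (f : MvPolynomial (Fin 2) S) (qq jj : ℕ) :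
    coeff (Finsupp.single 1 (jj + 1)) (f * (X 0 ^ (qq + 2) + C b * X 1 ^ (jj + 1)))
      = b * coeff (Finsupp.single 1 (jj + 1)) (f * X 1 ^ (jj + 1)) := by
  have h : f * (X 0 ^ (qq + 2) + C b * X 1 ^ (jj + 1))
      = f * X 0 ^ (qq + 1 + 1) + C b * (f * X 1 ^ (jj + 1)) := by ring
  rw [h, coeff_add, cA, coeff_C_mul, zero_add]

lemma cg3 (c : S) (f : MvPolynomial (Fin 2) S) (qq jj : ℕ) :
    coeff (Finsupp.single 1 (jj + 1)) (f * (X 1 ^ (jj + 2) + C c * X 0 ^ (qq + 1)))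
      = c * coeff (Finsupp.single 1 (jj + 1)) (f * X 0 ^ (qq + 1)) := by
  have h : f * (X 1 ^ (jj + 2) + C c * X 0 ^ (qq + 1))
      = f * X 1 ^ (jj + 1 + 1) + C c * (f * X 0 ^ (qq + 1)) := by ring
  rw [h, coeff_add, cB, coeff_C_mul, zero_add]

lemma hmonsplit (u : Fin 2 →₀ ℕ) (r : S) :
    (monomial u r : MvPolynomial (Fin 2) S) = r • (X 0 ^ (u 0) * X 1 ^ (u 1)) := by
  have hu : (Finsupp.single (0 : Fin 2) (u 0) + Finsupp.single 1 (u 1)) = u := by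
    ext t
    fin_cases t <;> simp [Finsupp.single_apply]
  rw [X_pow_eq_monomial, X_pow_eq_monomial, monomial_mul, mul_one, smul_monomial,
    smul_eq_mul, mul_one, hu]

end HilbAux

open HilbAux

instance quotAlg (S : Type) [CommRing S] (I : Ideal (MvPolynomial (Fin 2) S)) :
    Algebra S (MvPolynomial (Fin 2) S ⧸ I) := Ideal.Quotient.algebra S

set_option maxHeartbeats 1000000 in
set_option synthInstance.maxHeartbeats 1000000 in
/-- for an Artinian local ℂ-algebra `S` with residue field `ℂ`,
`m ≥ 3`, `2 ≤ i ≤ m−1` and `s, b, c` in the maximal ideal of `S`, the `S`-module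
`S[x,y]/(xy − s, x^{m+1−i} + b·y^{i−1}, yⁱ + c·x^{m−i})` is free of rank `m`
iff `b·c = s`. -/
theorem relative_hilbert_scheme_local_equation_at_Q
    (S : Type) [CommRing S] [Algebra ℂ S] [IsArtinianRing S] [IsLocalRing S]
    (hres : Function.Bijective (algebraMap ℂ (IsLocalRing.ResidueField S)))
    (m i : ℕ) (hm : 3 ≤ m) (hi1 : 2 ≤ i) (hi2 : i ≤ m - 1)
    (s b c : S) (hs : s ∈ IsLocalRing.maximalIdeal S)
    (hb : b ∈ IsLocalRing.maximalIdeal S) (hc : c ∈ IsLocalRing.maximalIdeal S) :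
    Nonempty (Module.Basis (Fin m) S (MvPolynomial (Fin 2) S ⧸
      (Ideal.span {X 0 * X 1 - C s, X 0 ^ (m + 1 - i) + C b * X 1 ^ (i - 1),
        X 1 ^ i + C c * X 0 ^ (m - i)} : Ideal (MvPolynomial (Fin 2) S)))) ↔
    b * c = s := by
  obtain ⟨j, rfl⟩ : ∃ j, i = j + 2 := ⟨i - 2, by omega⟩
  obtain ⟨q, rfl⟩ : ∃ q, m = j + q + 3 := ⟨m - j - 3, by omega⟩
  rw [show j + q + 3 + 1 - (j + 2) = q + 2 from by omega,
    show j + 2 - 1 = j + 1 from by omega,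
    show j + q + 3 - (j + 2) = q + 1 from by omega]
  set I : Ideal (MvPolynomial (Fin 2) S) :=
    Ideal.span {X 0 * X 1 - C s, X 0 ^ (q + 2) + C b * X 1 ^ (j + 1),
      X 1 ^ (j + 2) + C c * X 0 ^ (q + 1)} with hI
  have hsmul : ∀ (r : S) (f : MvPolynomial (Fin 2) S),
      r • Ideal.Quotient.mk I f = Ideal.Quotient.mk I (C r * f) := by
    intro r f
    exact ((Ideal.Quotient.mkₐ S I).toLinearMap.map_smul r f).symm.trans
      (congrArg _ (smul_eq_C_mul f r))
  -- coefficient lemma for elements of I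
  have hcoeffI : ∀ z ∈ I, ∀ f : MvPolynomial (Fin 2) S,
      coeff (Finsupp.single 1 (j + 1)) (f * z) ∈ IsLocalRing.maximalIdeal S := by
    intro z hz
    rw [hI] at hz
    induction hz using Submodule.span_induction with
    | mem g hg =>
      intro f
      simp only [Set.mem_insert_iff, Set.mem_singleton_iff] at hg
      rcases hg with rfl | rfl | rfl
      · rw [cg1]
        exact neg_mem (Ideal.mul_mem_right _ _ hs)
      · rw [cg2]
        exact Ideal.mul_mem_right _ _ hb
      · rw [cg3]
        exact Ideal.mul_mem_right _ _ hc
    | zero => intro f; simp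
    | add x y hx hy ihx ihy =>
      intro f
      rw [mul_add, coeff_add]
      exact Ideal.add_mem _ (ihx f) (ihy f)
    | smul a x hx ih =>
      intro f
      rw [smul_eq_mul, show f * (a * x) = (f * a) * x from by ring]
      exact ih (f * a)
  constructor
  · rintro ⟨β⟩
    -- (s - b*c) annihilates the class of X1^(j+1)
    have hginI : (C s - C (b * c)) * X 1 ^ (j + 1) ∈ I := by
      have hrw : (C s - C (b * c)) * (X 1 ^ (j + 1) : MvPolynomial (Fin 2) S)
          = (-(X 1 ^ (j + 1))) * (X 0 * X 1 - C s)
            + X 0 * (X 1 ^ (j + 2) + C c * X 0 ^ (q + 1))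
            + (-(C c)) * (X 0 ^ (q + 2) + C b * X 1 ^ (j + 1)) := by
        rw [map_mul]
        ring
      rw [hrw, hI]
      refine Ideal.add_mem _ (Ideal.add_mem _ ?_ ?_) ?_ <;>
        exact Ideal.mul_mem_left _ _ (Ideal.subset_span (by simp))
    have hv0 : (s - b * c) • (Ideal.Quotient.mk I (X 1 ^ (j + 1))) = 0 := by
      rw [hsmul, map_sub, Ideal.Quotient.eq_zero_iff_mem]
      exact hginI
    set v := Ideal.Quotient.mk I (X 1 ^ (j + 1)) with hv
    by_cases hall : ∀ k, β.repr v k ∈ IsLocalRing.maximalIdeal S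
    · exfalso
      have hvmem : v ∈ (IsLocalRing.maximalIdeal S •
          (⊤ : Submodule S (MvPolynomial (Fin 2) S ⧸ I))) := by
        rw [← Module.Basis.sum_repr β v]
        exact Submodule.sum_mem _ fun k _ => Submodule.smul_mem_smul (hall k) trivial
      have hmapeq : (IsLocalRing.maximalIdeal S •
            (⊤ : Submodule S (MvPolynomial (Fin 2) S ⧸ I)))
          = Submodule.map (Ideal.Quotient.mkₐ S I).toLinearMap
              (IsLocalRing.maximalIdeal S • (⊤ : Submodule S (MvPolynomial (Fin 2) S))) := by
        rw [Submodule.map_smul'', Submodule.map_top,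
          show LinearMap.range (Ideal.Quotient.mkₐ S I).toLinearMap = ⊤ from
            LinearMap.range_eq_top.mpr (Ideal.Quotient.mkₐ_surjective S I)]
      rw [hmapeq] at hvmem
      obtain ⟨g, hg, hgv⟩ := hvmem
      have hdiff : X 1 ^ (j + 1) - g ∈ I := by
        have h3 : Ideal.Quotient.mk I g = v := hgv
        exact Ideal.Quotient.eq.mp h3.symm
      have hcg : coeff (Finsupp.single 1 (j + 1)) g ∈ IsLocalRing.maximalIdeal S := by
        refine Submodule.smul_induction_on hg ?_ ?_
        · intro r hr n _
          rw [smul_eq_C_mul, coeff_C_mul]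
          exact Ideal.mul_mem_right _ _ hr
        · intro x y hx hy
          rw [coeff_add]
          exact Ideal.add_mem _ hx hy
      have h1m : (1 : S) ∈ IsLocalRing.maximalIdeal S := by
        have hd := hcoeffI _ hdiff 1
        rw [one_mul, coeff_sub] at hd
        have hx1 : coeff (Finsupp.single (1 : Fin 2) (j + 1))
            ((X 1 : MvPolynomial (Fin 2) S) ^ (j + 1)) = 1 := by
          rw [X_pow_eq_monomial, coeff_monomial, if_pos rfl]
        rw [hx1] at hd
        simpa using Ideal.add_mem _ hd hcg
      exact (Ideal.ne_top_iff_one _).mp (IsLocalRing.maximalIdeal.isMaximal S).ne_top h1m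
    · push_neg at hall
      obtain ⟨k, hk⟩ := hall
      have hunit : IsUnit (β.repr v k) := by
        by_contra hnu
        exact hk hnu
      have htz : (s - b * c) * β.repr v k = 0 := by
        have := congrArg (fun w => β.repr w k) hv0
        simpa [map_smul, Finsupp.smul_apply, smul_eq_mul] using this
      obtain ⟨u, hu⟩ := hunit
      have : (s - b * c) = 0 := by
        have h2 := congrArg (fun w => w * (↑u⁻¹ : S)) htz
        simp only [zero_mul] at h2
        rw [← hu, mul_assoc] at h2
        simpa [Units.mul_inv] using h2
      exact (sub_eq_zero.mp this).symm
  · intro hbc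
    classical
    let mono : Fin (j + q + 3) → MvPolynomial (Fin 2) S := fun k =>
      if (k : ℕ) ≤ q + 1 then X 0 ^ (k : ℕ) else X 1 ^ ((k : ℕ) - (q + 1))
    let T : (Fin (j + q + 3) → S) →ₗ[S] (MvPolynomial (Fin 2) S ⧸ I) :=
      (Pi.basisFun S (Fin (j + q + 3))).constr S fun k => Ideal.Quotient.mk I (mono k)
    let L : MvPolynomial (Fin 2) S →ₗ[S] (Fin (j + q + 3) → S) :=
      (basisMonomials (Fin 2) S).constr S fun d => F b c q j (d 0) (d 1)
    have hLmono : ∀ d : Fin 2 →₀ ℕ, L (monomial d 1) = F b c q j (d 0) (d 1) := by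
      intro d
      have h1 : (monomial d 1 : MvPolynomial (Fin 2) S) = basisMonomials (Fin 2) S d := by
        rw [coe_basisMonomials]
      rw [h1]
      exact Module.Basis.constr_basis _ _ _ _
    have hLP : ∀ a d : ℕ, L (X 0 ^ a * X 1 ^ d) = F b c q j a d := by
      intro a d
      have h1 : (X 0 ^ a * X 1 ^ d : MvPolynomial (Fin 2) S)
          = monomial (Finsupp.single 0 a + Finsupp.single 1 d) 1 := by
        rw [X_pow_eq_monomial, X_pow_eq_monomial, monomial_mul, mul_one]
      rw [h1, hLmono]
      congr 1 <;> simp [Finsupp.single_apply]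
    have hLI : ∀ z ∈ I, ∀ f : MvPolynomial (Fin 2) S, L (f * z) = 0 := by
      intro z hz
      rw [hI] at hz
      induction hz using Submodule.span_induction with
      | mem g hg =>
        intro f
        simp only [Set.mem_insert_iff, Set.mem_singleton_iff] at hg
        induction f using MvPolynomial.induction_on' with
        | add p1 p2 hp1 hp2 => rw [add_mul, map_add, hp1, hp2, add_zero]
        | monomial u r =>
          rw [hmonsplit u r, smul_mul_assoc, map_smul]
          rcases hg with rfl | rfl | rfl
          · rw [show (X 0 ^ (u 0) * X 1 ^ (u 1) : MvPolynomial (Fin 2) S) * (X 0 * X 1 - C s)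
                = X 0 ^ (u 0 + 1) * X 1 ^ (u 1 + 1) - C s * (X 0 ^ (u 0) * X 1 ^ (u 1)) from
                by ring,
              map_sub, ← smul_eq_C_mul, map_smul, hLP, hLP, F_succ_succ, hbc, sub_self,
              smul_zero]
          · rw [show (X 0 ^ (u 0) * X 1 ^ (u 1) : MvPolynomial (Fin 2) S) * (X 0 ^ (q + 2) + C b * X 1 ^ (j + 1))
                = X 0 ^ (u 0 + q + 2) * X 1 ^ (u 1)
                  + C b * (X 0 ^ (u 0) * X 1 ^ (u 1 + j + 1)) from by ring,
              map_add, ← smul_eq_C_mul, map_smul, hLP, hLP, FI2, neg_smul, neg_add_cancel,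
              smul_zero]
          · rw [show (X 0 ^ (u 0) * X 1 ^ (u 1) : MvPolynomial (Fin 2) S) * (X 1 ^ (j + 2) + C c * X 0 ^ (q + 1))
                = X 0 ^ (u 0) * X 1 ^ (u 1 + j + 2)
                  + C c * (X 0 ^ (u 0 + q + 1) * X 1 ^ (u 1)) from by ring,
              map_add, ← smul_eq_C_mul, map_smul, hLP, hLP, FI3, neg_smul, neg_add_cancel,
              smul_zero]
      | zero => intro f; rw [mul_zero, map_zero]
      | add x y hx hy ihx ihy =>
        intro f
        rw [mul_add, map_add, ihx f, ihy f, add_zero]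
      | smul a x hx ih =>
        intro f
        rw [smul_eq_mul, show f * (a * x) = (f * a) * x from by ring]
        exact ih (f * a)
    have hTe : ∀ k : Fin (j + q + 3), T (Pi.single k 1) = Ideal.Quotient.mk I (mono k) := by
      intro k
      have h1 : (Pi.single k (1 : S)) = Pi.basisFun S (Fin (j + q + 3)) k := by
        simp [Pi.basisFun_apply]
      rw [h1]
      exact Module.Basis.constr_basis _ _ _ _
    have key : ∀ n a d, (j + 2) * a + (q + 2) * d ≤ n →
        Ideal.Quotient.mk I (X 0 ^ a * X 1 ^ d) = T (F b c q j a d) := by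
      intro n
      induction n using Nat.strong_induction_on with
      | _ n ih =>
        intro a d hn
        match a, d with
        | a + 1, d + 1 =>
          have hlt : (j + 2) * a + (q + 2) * d < n := by nlinarith
          have hmem : (X 0 ^ (a + 1) * X 1 ^ (d + 1))
              - C (b * c) * (X 0 ^ a * X 1 ^ d) ∈ I := by
            rw [hbc, show (X 0 ^ (a + 1) * X 1 ^ (d + 1) : MvPolynomial (Fin 2) S)
                - C s * (X 0 ^ a * X 1 ^ d)
                = (X 0 ^ a * X 1 ^ d) * (X 0 * X 1 - C s) from by ring, hI]
            exact Ideal.mul_mem_left _ _ (Ideal.subset_span (by simp))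
          calc Ideal.Quotient.mk I (X 0 ^ (a + 1) * X 1 ^ (d + 1))
              = (b * c) • Ideal.Quotient.mk I (X 0 ^ a * X 1 ^ d) := by
                rw [hsmul]
                exact Ideal.Quotient.eq.mpr hmem
            _ = (b * c) • T (F b c q j a d) := by rw [ih _ hlt a d le_rfl]
            _ = T (F b c q j (a + 1) (d + 1)) := by rw [F_succ_succ, map_smul]
        | a, 0 =>
          by_cases ha : a ≤ q + 1
          · rw [F_x_le b c q j ha, hTe]
            have : mono (⟨a, by omega⟩ : Fin (j + q + 3)) = X 0 ^ a := by
              simp only [mono, if_pos ha]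
            rw [this, pow_zero, mul_one]
          · obtain ⟨k, rfl⟩ : ∃ k, a = k + q + 2 := ⟨a - q - 2, by omega⟩
            have hlt : (j + 2) * k + (q + 2) * (j + 1) < n := by nlinarith
            have hmem : (X 0 ^ (k + q + 2) * X 1 ^ 0)
                - C (-b) * (X 0 ^ k * X 1 ^ (j + 1)) ∈ I := by
              rw [map_neg, show (X 0 ^ (k + q + 2) * X 1 ^ 0 : MvPolynomial (Fin 2) S)
                  - -C b * (X 0 ^ k * X 1 ^ (j + 1))
                  = (X 0 ^ k) * (X 0 ^ (q + 2) + C b * X 1 ^ (j + 1)) from by ring, hI]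
              exact Ideal.mul_mem_left _ _ (Ideal.subset_span (by simp))
            calc Ideal.Quotient.mk I (X 0 ^ (k + q + 2) * X 1 ^ 0)
                = (-b) • Ideal.Quotient.mk I (X 0 ^ k * X 1 ^ (j + 1)) := by
                  rw [hsmul]
                  exact Ideal.Quotient.eq.mpr hmem
              _ = (-b) • T (F b c q j k (j + 1)) := by rw [ih _ hlt k (j + 1) le_rfl]
              _ = T (F b c q j (k + q + 2) 0) := by rw [F_x_gt, map_smul]
        | 0, d + 1 =>
          by_cases hd : d ≤ j
          · rw [F_y_le b c q j d hd, hTe]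
            have : mono (⟨q + 2 + d, by omega⟩ : Fin (j + q + 3)) = X 1 ^ (d + 1) := by
              simp only [mono, if_neg (by omega : ¬ (q + 2 + d ≤ q + 1))]
              rw [show q + 2 + d - (q + 1) = d + 1 from by omega]
            rw [this, pow_zero, one_mul]
          · obtain ⟨k, hk⟩ : ∃ k, d + 1 = k + j + 2 := ⟨d - j - 1, by omega⟩
            rw [hk]
            have hlt : (j + 2) * (q + 1) + (q + 2) * k < n := by
              rw [hk] at hn
              nlinarith
            have hmem : (X 0 ^ 0 * X 1 ^ (k + j + 2))
                - C (-c) * (X 0 ^ (q + 1) * X 1 ^ k) ∈ I := by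
              rw [map_neg, show (X 0 ^ 0 * X 1 ^ (k + j + 2) : MvPolynomial (Fin 2) S)
                  - -C c * (X 0 ^ (q + 1) * X 1 ^ k)
                  = (X 1 ^ k) * (X 1 ^ (j + 2) + C c * X 0 ^ (q + 1)) from by ring, hI]
              exact Ideal.mul_mem_left _ _ (Ideal.subset_span (by simp))
            calc Ideal.Quotient.mk I (X 0 ^ 0 * X 1 ^ (k + j + 2))
                = (-c) • Ideal.Quotient.mk I (X 0 ^ (q + 1) * X 1 ^ k) := by
                  rw [hsmul]
                  exact Ideal.Quotient.eq.mpr hmem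
              _ = (-c) • T (F b c q j (q + 1) k) := by rw [ih _ hlt (q + 1) k le_rfl]
              _ = T (F b c q j 0 (k + j + 2)) := by rw [F_y_gt, map_smul]
    have hLmonoK : ∀ k : Fin (j + q + 3), L (mono k) = Pi.single k (1 : S) := by
      intro k
      by_cases hk : (k : ℕ) ≤ q + 1
      · have h1 : mono k = X 0 ^ (k : ℕ) * X 1 ^ 0 := by
          simp only [mono, if_pos hk, pow_zero, mul_one]
        rw [h1, hLP, F_x_le b c q j hk]
      · have hklt := k.isLt
        obtain ⟨d, hd⟩ : ∃ d, (k : ℕ) - (q + 1) = d + 1 := ⟨(k : ℕ) - (q + 1) - 1, by omega⟩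
        have h1 : mono k = X 0 ^ 0 * X 1 ^ (d + 1) := by
          simp only [mono, if_neg hk, hd, pow_zero, one_mul]
        have hke : (⟨q + 2 + d, by omega⟩ : Fin (j + q + 3)) = k := by
          apply Fin.ext
          simp only [Fin.val_mk]
          omega
        rw [h1, hLP, F_y_le b c q j d (by omega), hke]
    have hTinj : ∀ z, T z = 0 → z = 0 := by
      intro z hz
      have hTz : T z = Ideal.Quotient.mk I (∑ k, z k • mono k) := by
        rw [Module.Basis.constr_apply_fintype]
        simp only [Pi.basisFun_equivFun, LinearEquiv.refl_apply]
        rw [map_sum]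
        refine Finset.sum_congr rfl fun k _ => ?_
        rw [hsmul, smul_eq_C_mul]
      have hmemz : (∑ k, z k • mono k) ∈ I := by
        rw [← Ideal.Quotient.eq_zero_iff_mem, ← hTz]
        exact hz
      have hz0 : L (∑ k, z k • mono k) = 0 := by
        have := hLI _ hmemz 1
        rwa [one_mul] at this
      have hzz : L (∑ k, z k • mono k) = z := by
        rw [map_sum]
        have : ∀ k : Fin (j + q + 3), L (z k • mono k) = Pi.single k (z k) := by
          intro k
          rw [map_smul, hLmonoK]
          ext t
          by_cases ht : t = k
          · subst ht; simp
          · simp [Pi.single_eq_of_ne ht]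
        simp only [this]
        exact Finset.univ_sum_single z
      rw [← hzz, hz0]
    have hTsurj : Function.Surjective T := by
      intro y
      obtain ⟨f, rfl⟩ := Ideal.Quotient.mk_surjective y
      induction f using MvPolynomial.induction_on' with
      | monomial u r =>
        refine ⟨r • F b c q j (u 0) (u 1), ?_⟩
        rw [map_smul, ← key _ (u 0) (u 1) le_rfl, hsmul, ← smul_eq_C_mul, ← hmonsplit]
      | add p1 p2 hp1 hp2 =>
        obtain ⟨z1, h1⟩ := hp1
        obtain ⟨z2, h2⟩ := hp2
        exact ⟨z1 + z2, by rw [map_add, h1, h2, map_add]⟩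
    have hTbij : Function.Bijective T := by
      constructor
      · intro z1 z2 h
        have : T (z1 - z2) = 0 := by rw [map_sub, h, sub_self]
        have := hTinj _ this
        exact sub_eq_zero.mp this
      · exact hTsurj
    exact ⟨(Pi.basisFun S (Fin (j + q + 3))).map (LinearEquiv.ofBijective T hTbij)⟩

end
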